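/- Let G be a game graph with weight function w, let Π be the optimal QaSTel, and let c ∈ ℕ. Then every (Π,c)-play starting at a node of Win(G, En_c(w)) lies in En_c(w). Consequently, every Player-0 strategy π with π ⊨_c Π is winning from every node of Win(G, En_c(w)) in the energy game (G, En_c(w)). -/

import Mathlib

open scoped Classical

noncomputable section

namespace QaSTelPaper

variable {V : Type*}

/-- Prefix weight `w(ρ[0;i])` of a play. -/
def prefW (w : V × V → ℤ) (ρ : ℕ → V) (i : ℕ) : ℤ :=
  ∑ j ∈ Finset.range i, w (ρ j, ρ (j + 1))

/-- A play on the edge set `E`. -/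
def IsPlay (E : Set (V × V)) (ρ : ℕ → V) : Prop :=
  ∀ i, (ρ i, ρ (i + 1)) ∈ E

/-- A Player-0 strategy assigns to each history and current Player-0 node a successor
that forms an edge. -/
def IsStrategy (V0 : Set V) (E : Set (V × V)) (π : List V → V → V) : Prop :=
  ∀ H v, v ∈ V0 → (v, π H v) ∈ E

/-- History of the play `ρ` strictly before index `i`. -/
def hist (ρ : ℕ → V) (i : ℕ) : List V :=
  List.ofFn fun j : Fin i => ρ j.1

/-- `ρ` is a `π`-play. -/
def FollowsStrat (V0 : Set V) (π : List V → V → V) (ρ : ℕ → V) : Prop :=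
  ∀ i, ρ i ∈ V0 → ρ (i + 1) = π (hist ρ i) (ρ i)

/-- The energy objective `En_c(w)`. -/
def En (w : V × V → ℤ) (c : ℕ) : Set (ℕ → V) :=
  {ρ | ∀ i, 0 ≤ (c : ℤ) + prefW w ρ i}

/-- The mean-payoff objective `MP(w)`. -/
def MP (w : V × V → ℤ) : Set (ℕ → V) :=
  {ρ | 0 ≤ Filter.limsup (fun n : ℕ => ((prefW w ρ n : ℝ) / (n : ℝ) : EReal)) Filter.atTop}

/-- `π` is winning from `v` for objective `φ`. -/
def WinningFrom (V0 : Set V) (E : Set (V × V)) (π : List V → V → V)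
    (φ : Set (ℕ → V)) (v : V) : Prop :=
  ∀ ρ, IsPlay E ρ → FollowsStrat V0 π ρ → ρ 0 = v → ρ ∈ φ

/-- The winning region of Player 0 for objective `φ`. -/
def Win (V0 : Set V) (E : Set (V × V)) (φ : Set (ℕ → V)) : Set V :=
  {v | ∃ π, IsStrategy V0 E π ∧ WinningFrom V0 E π φ v}

/-- A quantitative strategy template (QaSTel): monotone assignment of sets of activated
outgoing edges. -/
def IsQaSTel (E : Set (V × V)) (Temp : V → ℕ∞ → Set (V × V)) : Prop :=
  (∀ u c e, e ∈ Temp u c → e ∈ E ∧ e.1 = u) ∧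
  ∀ u c c', c ≤ c' → Temp u c ⊆ Temp u c'

/-- Activation value `act_Π(e)`: the least `k` such that `e ∈ Π(e.1, c)` for all `c ≥ k`. -/
def act (Temp : V → ℕ∞ → Set (V × V)) (e : V × V) : ℕ∞ :=
  sInf {k : ℕ∞ | ∀ c, k ≤ c → e ∈ Temp e.1 c}

/-- A QaSTel extended to integer credits: empty for negative credits. -/
def tmplZ (Temp : V → ℕ∞ → Set (V × V)) (u : V) (z : ℤ) : Set (V × V) :=
  if 0 ≤ z then Temp u (z.toNat : ℕ∞) else ∅

/-- `ρ` is a `(Π, c)`-play. -/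
def TemplatePlay (V0 : Set V) (w : V × V → ℤ) (Temp : V → ℕ∞ → Set (V × V))
    (c : ℕ) (ρ : ℕ → V) : Prop :=
  (∀ i, ρ i ∈ V0 → (ρ i, ρ (i + 1)) ∈ tmplZ Temp (ρ i) ((c : ℤ) + prefW w ρ i)) ∨
  ∃ k : ℕ,
    (∀ i ≤ k, ρ i ∈ V0 → (ρ i, ρ (i + 1)) ∈ tmplZ Temp (ρ i) ((c : ℤ) + prefW w ρ i)) ∧
    ρ (k + 1) ∈ V0 ∧ tmplZ Temp (ρ (k + 1)) ((c : ℤ) + prefW w ρ (k + 1)) = ∅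

/-- `π ⊨_c Π`: every `π`-play is a `(Π, c)`-play. -/
def FollowsTemplate (V0 : Set V) (E : Set (V × V)) (w : V × V → ℤ)
    (π : List V → V → V) (Temp : V → ℕ∞ → Set (V × V)) (c : ℕ) : Prop :=
  ∀ ρ, IsPlay E ρ → FollowsStrat V0 π ρ → TemplatePlay V0 w Temp c ρ

/-- Shift a play by one step. -/
def shift (ρ : ℕ → V) : ℕ → V := fun i => ρ (i + 1)

/-- The edge-optimal value `optE(e)`: the least `m` such that for every initial credit
`c ≥ m` there is a Player-0 strategy `π` with `plays_π(G,e) ⊆ En_c(w)`. -/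
def optE (V0 : Set V) (E : Set (V × V)) (w : V × V → ℤ) (e : V × V) : ℕ∞ :=
  sInf {m : ℕ∞ | ∀ c : ℕ, m ≤ (c : ℕ∞) →
    ∃ π, IsStrategy V0 E π ∧
      ∀ ρ, IsPlay E ρ → (ρ 0, ρ 1) = e → FollowsStrat V0 π (shift ρ) → ρ ∈ En w c}

/-- The node-optimal value `opt(v)`. -/
def optV (V0 : Set V) (E : Set (V × V)) (w : V × V → ℤ) (v : V) : ℕ∞ :=
  sInf {m : ℕ∞ | ∀ c : ℕ, m ≤ (c : ℕ∞) →
    ∃ π, IsStrategy V0 E π ∧ WinningFrom V0 E π (En w c) v}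

/-- Truncated subtraction `l ⊖ a` of an integer from an extended natural. -/
def osub (l : ℕ∞) (a : ℤ) : ℕ∞ :=
  if l = ⊤ then ⊤ else (((l.toNat : ℤ) - a).toNat : ℕ∞)

/-- The edge-based value-iteration operator `O_E`. -/
def OE (V0 : Set V) (E : Set (V × V)) (w : V × V → ℤ)
    (μ : V × V → ℕ∞) (e : V × V) : ℕ∞ :=
  if e.2 ∈ V0 then
    sInf {x : ℕ∞ | ∃ e' ∈ E, e'.1 = e.2 ∧ x = osub (μ e') (w e)}
  else
    sSup {x : ℕ∞ | ∃ e' ∈ E, e'.1 = e.2 ∧ x = osub (μ e') (w e)}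

/-- The optimal QaSTel `Temp(u,k) = {e ∈ E(u) : optE(e) ≤ k}`. -/
def optTmpl (V0 : Set V) (E : Set (V × V)) (w : V × V → ℤ) :
    V → ℕ∞ → Set (V × V) :=
  fun u k => {e | e ∈ E ∧ e.1 = u ∧ optE V0 E w e ≤ k}

/-- Canonical extension of the memory-update function to histories. -/
def updMem {M : Type*} (α : M × V → M) (m0 : M) (H : List V) : M :=
  H.foldl (fun m v => α (m, v)) m0

/-- The strategy induced by a finite-memory machine `(M, m0, α, β)`. -/
def memStrat {M : Type*} (α : M × V → M) (β : M × V → V) (m0 : M) :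
    List V → V → V :=
  fun H v => β (updMem α m0 H, v)

end QaSTelPaper

namespace QaSTelAux

open QaSTelPaper

variable {V : Type*}

/-! ### Basic play/history lemmas -/

def prepend (v : V) (σ : ℕ → V) : ℕ → V := fun n => Nat.rec v (fun m _ => σ m) n

lemma shift_prepend (v : V) (σ : ℕ → V) : shift (prepend v σ) = σ := rfl

lemma hist_zero (ρ : ℕ → V) : hist ρ 0 = [] := rfl

lemma hist_succ_cons (ρ : ℕ → V) (n : ℕ) : hist ρ (n+1) = ρ 0 :: hist (shift ρ) n := by
  simp [hist, shift, List.ofFn_succ]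

lemma hist_succ (ρ : ℕ → V) (n : ℕ) : hist ρ (n + 1) = hist ρ n ++ [ρ n] := by
  unfold hist
  rw [List.ofFn_succ']
  simp [List.concat_eq_append]

lemma hist_prepend (v : V) (σ : ℕ → V) (n : ℕ) :
    hist (prepend v σ) (n + 1) = v :: hist σ n := by
  rw [hist_succ_cons, shift_prepend]; rfl

lemma prefW_succ (w : V × V → ℤ) (ρ : ℕ → V) (n : ℕ) :
    prefW w ρ (n + 1) = prefW w ρ n + w (ρ n, ρ (n + 1)) := Finset.sum_range_succ _ _

lemma prefW_zero (w : V × V → ℤ) (ρ : ℕ → V) : prefW w ρ 0 = 0 := rfl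

lemma prefW_prepend (w : V × V → ℤ) (v : V) (σ : ℕ → V) (n : ℕ) :
    prefW w (prepend v σ) (n + 1) = w (v, σ 0) + prefW w σ n := by
  unfold prefW
  rw [Finset.sum_range_succ']
  rw [add_comm]
  rfl

lemma csInf_mem_of_upclosed {S : Set ℕ∞} (hS : ∀ ⦃a b : ℕ∞⦄, a ∈ S → a ≤ b → b ∈ S)
    {n : ℕ} (h : sInf S ≤ (n : ℕ∞)) : (n : ℕ∞) ∈ S := by
  have hne : S.Nonempty := by
    by_contra hc
    rw [Set.not_nonempty_iff_eq_empty] at hc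
    rw [hc, sInf_empty, top_le_iff] at h
    exact (ENat.coe_ne_top n) h
  obtain ⟨m, hmS, hmin⟩ := (IsWellFounded.wf (r := ((· < ·) : ℕ∞ → ℕ∞ → Prop))).has_min S hne
  exact hS hmS (le_trans (le_sInf fun x hx => not_lt.1 (hmin x hx)) h)

lemma En_mono {w : V × V → ℤ} {c c' : ℕ} (h : c ≤ c') : En w c ⊆ En w c' := by
  intro ρ hρ i
  have h1 := hρ i
  have h2 : (c : ℤ) ≤ (c' : ℤ) := by exact_mod_cast h
  linarith

/-! ### Building plays that follow a strategy -/

def buildP (f : List V → V → V) (v : V) : ℕ → List V × V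
  | 0 => ([], v)
  | n + 1 => ((buildP f v n).1 ++ [(buildP f v n).2], f (buildP f v n).1 (buildP f v n).2)

def build (f : List V → V → V) (v : V) (n : ℕ) : V := (buildP f v n).2

lemma buildP_fst (f : List V → V → V) (v : V) : ∀ n, (buildP f v n).1 = hist (build f v) n
  | 0 => rfl
  | n + 1 => by
      show (buildP f v n).1 ++ [(buildP f v n).2] = _
      rw [buildP_fst f v n, hist_succ]
      rfl

lemma build_succ (f : List V → V → V) (v : V) (n : ℕ) :
    build f v (n + 1) = f (hist (build f v) n) (build f v n) := by
  show f (buildP f v n).1 (buildP f v n).2 = _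
  rw [buildP_fst]
  rfl

lemma build_play (V0 : Set V) (E : Set (V × V)) (π : List V → V → V)
    (hπ : IsStrategy V0 E π) (hE : ∀ u : V, ∃ u', (u, u') ∈ E) (v : V) :
    ∃ σ : ℕ → V, σ 0 = v ∧ IsPlay E σ ∧ FollowsStrat V0 π σ := by
  classical
  have hch : ∀ u : V, (u, (hE u).choose) ∈ E := fun u => (hE u).choose_spec
  set f : List V → V → V := fun H u => if u ∈ V0 then π H u else (hE u).choose with hf
  refine ⟨build f v, rfl, ?_, ?_⟩
  · intro i
    rw [build_succ]
    by_cases h : build f v i ∈ V0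
    · simp only [hf] at h ⊢; rw [if_pos h]
      exact hπ _ _ h
    · simp only [hf] at h ⊢; rw [if_neg h]
      exact hch _
  · intro i hi
    rw [build_succ]
    simp only [hf] at hi ⊢; rw [if_pos hi]

/-! ### Key step lemmas -/

lemma optV_le_of_win (V0 : Set V) (E : Set (V × V)) (w : V × V → ℤ) {v : V} {c : ℕ}
    (h : v ∈ Win V0 E (En w c)) : optV V0 E w v ≤ (c : ℕ∞) := by
  obtain ⟨π, hπ, hwin⟩ := h
  apply sInf_le
  intro c' hc'
  exact ⟨π, hπ, fun ρ h1 h2 h3 => En_mono (by exact_mod_cast hc') (hwin ρ h1 h2 h3)⟩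

lemma optE_step (V0 : Set V) (E : Set (V × V)) (hE : ∀ u : V, ∃ u', (u, u') ∈ E)
    (w : V × V → ℤ) {e : V × V} (heE : e ∈ E) {k : ℕ}
    (h : optE V0 E w e ≤ (k : ℕ∞)) :
    0 ≤ (k : ℤ) + w e ∧ optV V0 E w e.2 ≤ ((((k : ℤ) + w e).toNat : ℕ) : ℕ∞) := by
  have hmem : (k : ℕ∞) ∈ {m : ℕ∞ | ∀ c : ℕ, m ≤ (c : ℕ∞) →
      ∃ π, IsStrategy V0 E π ∧
        ∀ ρ, IsPlay E ρ → (ρ 0, ρ 1) = e → FollowsStrat V0 π (shift ρ) → ρ ∈ En w c} := by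
    unfold optE at h
    refine csInf_mem_of_upclosed ?_ h
    intro a b ha hab c hc
    exact ha c (hab.trans hc)
  obtain ⟨π, hπ, hwin⟩ := hmem k le_rfl
  have key : ∀ σ : ℕ → V, σ 0 = e.2 → IsPlay E σ → FollowsStrat V0 π σ →
      ∀ i, 0 ≤ (k : ℤ) + w e + prefW w σ i := by
    intro σ hσ0 hσp hσf i
    have hplay : IsPlay E (prepend e.1 σ) := by
      intro j
      cases j with
      | zero =>
        show (e.1, σ 0) ∈ E
        rw [hσ0]
        simpa using heE
      | succ j => exact hσp j
    have hed : ((prepend e.1 σ) 0, (prepend e.1 σ) 1) = e := by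
      show (e.1, σ 0) = e
      rw [hσ0]
    have hEn := hwin (prepend e.1 σ) hplay hed (by rw [shift_prepend]; exact hσf)
    have h1 := hEn (i + 1)
    rw [prefW_prepend, hσ0] at h1
    simp only [Prod.mk.eta] at h1
    linarith
  obtain ⟨σ, hσ0, hσp, hσf⟩ := build_play V0 E π hπ hE e.2
  refine ⟨by simpa [prefW_zero] using key σ hσ0 hσp hσf 0, ?_⟩
  apply sInf_le
  intro c'' hc''
  refine ⟨π, hπ, ?_⟩
  intro τ hτp hτf hτ0 i
  have h1 := key τ hτ0 hτp hτf i
  have h2 : ((k : ℤ) + w e) ≤ (c'' : ℤ) := by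
    have h3 : (((k : ℤ) + w e).toNat : ℕ) ≤ c'' := by exact_mod_cast hc''
    omega
  linarith

lemma optV_step_p1 (V0 : Set V) (E : Set (V × V)) (hE : ∀ u : V, ∃ u', (u, u') ∈ E)
    (w : V × V → ℤ) {v v' : V} (hv : v ∉ V0) (hvv' : (v, v') ∈ E) {n : ℕ}
    (h : optV V0 E w v ≤ (n : ℕ∞)) :
    0 ≤ (n : ℤ) + w (v, v') ∧
      optV V0 E w v' ≤ ((((n : ℤ) + w (v, v')).toNat : ℕ) : ℕ∞) := by
  have hmem : (n : ℕ∞) ∈ {m : ℕ∞ | ∀ c : ℕ, m ≤ (c : ℕ∞) →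
      ∃ π, IsStrategy V0 E π ∧ WinningFrom V0 E π (En w c) v} := by
    unfold optV at h
    refine csInf_mem_of_upclosed ?_ h
    intro a b ha hab c hc
    exact ha c (hab.trans hc)
  obtain ⟨π, hπ, hwin⟩ := hmem n le_rfl
  set π' : List V → V → V := fun H u => π (v :: H) u with hπ'def
  have hπ' : IsStrategy V0 E π' := fun H u hu => hπ _ u hu
  have key : ∀ σ : ℕ → V, σ 0 = v' → IsPlay E σ → FollowsStrat V0 π' σ →
      ∀ i, 0 ≤ (n : ℤ) + w (v, v') + prefW w σ i := by
    intro σ hσ0 hσp hσf i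
    have hplay : IsPlay E (prepend v σ) := by
      intro j
      cases j with
      | zero =>
        show (v, σ 0) ∈ E
        rw [hσ0]; exact hvv'
      | succ j => exact hσp j
    have hfol : FollowsStrat V0 π (prepend v σ) := by
      intro j hj
      cases j with
      | zero => exact absurd hj hv
      | succ j =>
        have h1 := hσf j hj
        show σ (j + 1) = π (hist (prepend v σ) (j + 1)) (σ j)
        rw [hist_prepend]
        exact h1
    have hEn := hwin (prepend v σ) hplay hfol rfl
    have h1 := hEn (i + 1)
    rw [prefW_prepend, hσ0] at h1
    linarith
  obtain ⟨σ, hσ0, hσp, hσf⟩ := build_play V0 E π' hπ' hE v'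
  refine ⟨by simpa [prefW_zero] using key σ hσ0 hσp hσf 0, ?_⟩
  apply sInf_le
  intro c'' hc''
  refine ⟨π', hπ', ?_⟩
  intro τ hτp hτf hτ0 i
  have h1 := key τ hτ0 hτp hτf i
  have h2 : ((n : ℤ) + w (v, v')) ≤ (c'' : ℤ) := by
    have h3 : (((n : ℤ) + w (v, v')).toNat : ℕ) ≤ c'' := by exact_mod_cast hc''
    omega
  linarith

lemma optE_of_optV_p0 (V0 : Set V) (E : Set (V × V)) (w : V × V → ℤ)
    {v : V} (hv : v ∈ V0) {n : ℕ} (h : optV V0 E w v ≤ (n : ℕ∞)) :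
    ∃ v', (v, v') ∈ E ∧ optE V0 E w (v, v') ≤ (n : ℕ∞) := by
  have hmem : (n : ℕ∞) ∈ {m : ℕ∞ | ∀ c : ℕ, m ≤ (c : ℕ∞) →
      ∃ π, IsStrategy V0 E π ∧ WinningFrom V0 E π (En w c) v} := by
    unfold optV at h
    refine csInf_mem_of_upclosed ?_ h
    intro a b ha hab c hc
    exact ha c (hab.trans hc)
  obtain ⟨π, hπ, hwin⟩ := hmem n le_rfl
  refine ⟨π [] v, hπ [] v hv, ?_⟩
  apply sInf_le
  intro c'' hc''
  refine ⟨fun H u => π (v :: H) u, fun H u hu => hπ _ _ hu, ?_⟩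
  intro ρ hρp hρe hρf
  have h0 : ρ 0 = v := congrArg Prod.fst hρe
  have hfol : FollowsStrat V0 π ρ := by
    intro j hj
    cases j with
    | zero =>
      show ρ 1 = π (hist ρ 0) (ρ 0)
      rw [hist_zero, h0]
      exact congrArg Prod.snd hρe
    | succ j =>
      have h1 := hρf j hj
      show ρ (j + 2) = π (hist ρ (j + 1)) (ρ (j + 1))
      rw [hist_succ_cons, h0]
      exact h1
  exact En_mono (by exact_mod_cast hc'') (hwin ρ hρp hfol h0)

/-! ### The invariant -/

lemma invariant (V0 : Set V) (E : Set (V × V)) (hE : ∀ u : V, ∃ u', (u, u') ∈ E)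
    (w : V × V → ℤ) (c : ℕ) (ρ : ℕ → V) (hρ : IsPlay E ρ)
    (h0 : optV V0 E w (ρ 0) ≤ (c : ℕ∞)) (N : ℕ)
    (htm : ∀ i < N, ρ i ∈ V0 →
      (ρ i, ρ (i + 1)) ∈ tmplZ (optTmpl V0 E w) (ρ i) ((c : ℤ) + prefW w ρ i)) :
    ∀ i ≤ N, ∃ n : ℕ, optV V0 E w (ρ i) ≤ (n : ℕ∞) ∧ (n : ℤ) ≤ (c : ℤ) + prefW w ρ i := by
  intro i
  induction i with
  | zero =>
    intro _
    exact ⟨c, h0, by simp [prefW_zero]⟩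
  | succ i ih =>
    intro hiN
    obtain ⟨n, hopt, hle⟩ := ih (Nat.le_of_succ_le hiN)
    by_cases hV : ρ i ∈ V0
    · have htmi := htm i (Nat.lt_of_succ_le hiN) hV
      rw [tmplZ] at htmi
      split_ifs at htmi with hz
      · obtain ⟨hEm, -, hoptE⟩ := htmi
        obtain ⟨hpos, hoptV⟩ := optE_step V0 E hE w hEm hoptE
        refine ⟨((((c : ℤ) + prefW w ρ i).toNat : ℤ) + w (ρ i, ρ (i + 1))).toNat, hoptV, ?_⟩
        rw [prefW_succ]
        omega
      · exact absurd htmi (Set.notMem_empty _)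
    · obtain ⟨hpos, hoptV⟩ := optV_step_p1 V0 E hE w hV (hρ i) hopt
      refine ⟨(((n : ℤ)) + w (ρ i, ρ (i + 1))).toNat, hoptV, ?_⟩
      rw [prefW_succ]
      omega

end QaSTelAux


open QaSTelPaper in
/-- every `(Π,c)`-play of the optimal QaSTel starting in the winning region
of the energy game `En_c(w)` satisfies the energy objective; consequently, every strategy
following the optimal QaSTel with credit `c` is winning from the winning region. -/
theorem statement7 {V : Type*} [Fintype V]
    (V0 : Set V) (E : Set (V × V)) (hE : ∀ v : V, ∃ v', (v, v') ∈ E)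
    (w : V × V → ℤ) (W : ℕ) (hw : ∀ e ∈ E, |w e| ≤ (W : ℤ)) (c : ℕ) :
    (∀ ρ : ℕ → V, IsPlay E ρ → TemplatePlay V0 w (optTmpl V0 E w) c ρ →
      ρ 0 ∈ Win V0 E (En w c) → ρ ∈ En w c) ∧
    ∀ π, IsStrategy V0 E π → FollowsTemplate V0 E w π (optTmpl V0 E w) c →
      ∀ v ∈ Win V0 E (En w c), WinningFrom V0 E π (En w c) v := by
  have part1 : ∀ ρ : ℕ → V, IsPlay E ρ → TemplatePlay V0 w (optTmpl V0 E w) c ρ →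
      ρ 0 ∈ Win V0 E (En w c) → ρ ∈ En w c := by
    intro ρ hρp htp hwin0
    have h0 := QaSTelAux.optV_le_of_win V0 E w hwin0
    cases htp with
    | inl ha =>
      intro i
      obtain ⟨n, -, hle⟩ := QaSTelAux.invariant V0 E hE w c ρ hρp h0 i
        (fun j _ hj => ha j hj) i le_rfl
      omega
    | inr hb =>
      exfalso
      obtain ⟨k, hk, hkV0, hkempty⟩ := hb
      obtain ⟨n, hopt, hle⟩ := QaSTelAux.invariant V0 E hE w c ρ hρp h0 (k + 1)
        (fun j hj hjV => hk j (Nat.lt_succ_iff.mp hj) hjV) (k + 1) le_rfl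
      obtain ⟨v', hv'E, hv'opt⟩ := QaSTelAux.optE_of_optV_p0 V0 E w hkV0 hopt
      have hz : (0 : ℤ) ≤ (c : ℤ) + prefW w ρ (k + 1) := by omega
      have hmem : (ρ (k + 1), v') ∈
          tmplZ (optTmpl V0 E w) (ρ (k + 1)) ((c : ℤ) + prefW w ρ (k + 1)) := by
        rw [tmplZ, if_pos hz]
        refine ⟨hv'E, rfl, le_trans hv'opt ?_⟩
        have hn : n ≤ ((c : ℤ) + prefW w ρ (k + 1)).toNat := by omega
        exact_mod_cast Nat.cast_le.mpr hn
      rw [hkempty] at hmem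
      exact hmem
  refine ⟨part1, ?_⟩
  intro π hπ hft v hv ρ h1 h2 h3
  refine part1 ρ h1 (hft ρ h1 h2) ?_
  rw [h3]
  exact hv
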